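/- If n is a composite number with 2^(n-1) ≡ 1 (mod n), then 2^n - 1 is also composite and satisfies 2^(2^n - 2) ≡ 1 (mod 2^n - 1). Consequently, there are infinitely many 2-pseudoprimes. -/
import Mathlib

lemma my_pow_sub_one_dvd {a b : ℕ} (h : a ∣ b) : 2 ^ a - 1 ∣ 2 ^ b - 1 := by
  obtain ⟨c, rfl⟩ := h
  rw [pow_mul]
  simpa using Nat.sub_dvd_pow_sub_pow (2 ^ a) 1 c

lemma my_step (k : ℕ) (hk : 1 < k) (hc : ¬ Nat.Prime k)
    (hp : 2 ^ (k - 1) ≡ 1 [MOD k]) :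
    1 < 2 ^ k - 1 ∧ ¬ Nat.Prime (2 ^ k - 1) ∧ 2 ^ (2 ^ k - 2) ≡ 1 [MOD 2 ^ k - 1] := by
  have h4 : 2 ^ 2 ≤ 2 ^ k := Nat.pow_le_pow_right (by norm_num) hk
  have hlt : 1 < 2 ^ k - 1 := by omega
  obtain ⟨a, ha, ha1, hak⟩ := Nat.exists_dvd_of_not_prime2 hk hc
  have hdvd : 2 ^ a - 1 ∣ 2 ^ k - 1 := my_pow_sub_one_dvd ha
  have h4a : 2 ^ 2 ≤ 2 ^ a := Nat.pow_le_pow_right (by norm_num) ha1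
  have hak2 : 2 ^ a < 2 ^ k := Nat.pow_lt_pow_right (by norm_num) hak
  have hnp : ¬ Nat.Prime (2 ^ k - 1) := by
    intro hpr
    rcases (Nat.Prime.eq_one_or_self_of_dvd hpr _ hdvd) with h | h <;> omega
  have h1 : k ∣ 2 ^ (k - 1) - 1 :=
    (Nat.modEq_iff_dvd' Nat.one_le_two_pow).mp hp.symm
  have h2 : k ∣ 2 ^ k - 2 := by
    have he : 2 ^ k = 2 * 2 ^ (k - 1) := by
      rw [← pow_succ']; congr 1; omega
    have he2 : 2 ^ k - 2 = 2 * (2 ^ (k - 1) - 1) := by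
      have : 1 ≤ 2 ^ (k - 1) := Nat.one_le_two_pow
      omega
    rw [he2]; exact (h1).mul_left 2
  have h3 : 2 ^ k - 1 ∣ 2 ^ (2 ^ k - 2) - 1 := my_pow_sub_one_dvd h2
  exact ⟨hlt, hnp, ((Nat.modEq_iff_dvd' Nat.one_le_two_pow).mpr h3).symm⟩

lemma my_add_two_le (m : ℕ) (hm : 1 < m) : m + 2 ≤ 2 ^ m := by
  induction m with
  | zero => omega
  | succ j ih =>
    rcases Nat.lt_or_ge 1 j with h | h
    · have := ih h
      rw [pow_succ]; omega
    · interval_cases j <;> simp <;> omega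

theorem two_pseudoprime_lift (n : ℕ) (hn : 1 < n) (hcomp : ¬ Nat.Prime n)
    (hps : 2 ^ (n - 1) ≡ 1 [MOD n]) :
    ¬ Nat.Prime (2 ^ n - 1) ∧ 2 ^ (2 ^ n - 2) ≡ 1 [MOD 2 ^ n - 1] ∧
      {k : ℕ | 1 < k ∧ ¬ Nat.Prime k ∧ 2 ^ (k - 1) ≡ 1 [MOD k]}.Infinite := by
  obtain ⟨h1, h2, h3⟩ := my_step n hn hcomp hps
  refine ⟨h2, h3, ?_⟩
  set S := {k : ℕ | 1 < k ∧ ¬ Nat.Prime k ∧ 2 ^ (k - 1) ≡ 1 [MOD k]} with hS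
  let g : ℕ → ℕ := fun i => Nat.rec n (fun _ x => 2 ^ x - 1) i
  have hmem : ∀ i, g i ∈ S := by
    intro i
    induction i with
    | zero => exact ⟨hn, hcomp, hps⟩
    | succ j ih =>
      obtain ⟨a, b, c⟩ := ih
      obtain ⟨x, y, z⟩ := my_step (g j) a b c
      exact ⟨x, y, z⟩
  have hg : ∀ i, g i < g (i + 1) := by
    intro i
    obtain ⟨a, _, _⟩ := hmem i
    have : g i + 2 ≤ 2 ^ (g i) := my_add_two_le (g i) a
    show g i < 2 ^ (g i) - 1
    omega
  exact Set.infinite_of_injective_forall_mem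
    (strictMono_nat_of_lt_succ hg).injective hmem
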